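/- If X_1, ..., X_n are as follows: X_i ∈ H_i, X_i is independent of F_{i-1}, each X_i lower bounded or in L_b¹, and E(X_i) = 0 for all i, then the partial sums S_j = X_1 + ... + X_j form an SL-martingale: E_n(S_m) = S_n for all n ≤ m. -/

import Mathlib

open MeasureTheory Filter Set

/-- An `F_t`-consistent sublinear expectation (`SL`-expectation) in discrete time:
a filtration `F t` of sub-σ-algebras, a space `H` of measurable real functions closed
under constants, `|·|`, addition, scalar multiplication and multiplication by indicators,
and conditional expectations `Et t : H → H ∩ mF_t` satisfying monotonicity, the tower
property, locality, projection, sub-additivity, positive homogeneity and the monotone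
continuity (Fatou) property.  `E := Et 0` is identified with a real-valued functional. -/
structure CondSLExp (Ω : Type*) [m : MeasurableSpace Ω] where
  F : ℕ → MeasurableSpace Ω
  F_le : ∀ t, F t ≤ m
  F_mono : Monotone F
  H : Set (Ω → ℝ)
  H_meas : ∀ X ∈ H, Measurable X
  const_mem : ∀ c : ℝ, (fun _ => c) ∈ H
  abs_mem : ∀ X ∈ H, (fun ω => |X ω|) ∈ H
  add_mem : ∀ X ∈ H, ∀ Y ∈ H, X + Y ∈ H
  smul_mem : ∀ (c : ℝ), ∀ X ∈ H, c • X ∈ H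
  indmul_mem : ∀ (A : Set Ω), MeasurableSet A → ∀ X ∈ H, A.indicator X ∈ H
  Et : ℕ → (Ω → ℝ) → (Ω → ℝ)
  E : (Ω → ℝ) → ℝ
  E0_eq : ∀ X ∈ H, ∀ ω, Et 0 X ω = E X
  Et_mem : ∀ t, ∀ X ∈ H, Et t X ∈ H
  Et_meas : ∀ t, ∀ X ∈ H, Measurable[F t] (Et t X)
  mono : ∀ t, ∀ X ∈ H, ∀ Y ∈ H, (∀ ω, X ω ≤ Y ω) → ∀ ω, Et t X ω ≤ Et t Y ω
  tower : ∀ s t : ℕ, s ≤ t → ∀ Y ∈ H, Et s (Et t Y) = Et s Y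
  locality : ∀ (t : ℕ) (A : Set Ω), MeasurableSet[F t] A → ∀ Y ∈ H,
      Et t (A.indicator Y) = A.indicator (Et t Y)
  proj : ∀ t, ∀ Y ∈ H, Measurable[F t] Y → Et t Y = Y
  subadd : ∀ t, ∀ X ∈ H, ∀ Y ∈ H, ∀ ω, Et t (X + Y) ω ≤ Et t X ω + Et t Y ω
  poshom : ∀ (t : ℕ) (lam : Ω → ℝ), lam ∈ H → Measurable[F t] lam → ∀ Y ∈ H,
      (fun ω => lam ω * Y ω) ∈ H →
      ∀ ω, Et t (fun ω' => lam ω' * Y ω') ω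
        = max (lam ω) 0 * Et t Y ω + max (-(lam ω)) 0 * Et t (fun ω' => -(Y ω')) ω
  fatou : ∀ X : ℕ → Ω → ℝ, (∀ i, X i ∈ H) → (∀ ω, Antitone fun i => X i ω) →
      (∀ ω, Tendsto (fun i => X i ω) atTop (nhds 0)) →
      Tendsto (fun i => E (X i)) atTop (nhds 0)

variable {Ω : Type*} [MeasurableSpace Ω]

/-- The upper capacity `V(A) := E(I_A)`. -/
noncomputable def CondSLExp.V (S : CondSLExp Ω) (A : Set Ω) : ℝ :=
  S.E (A.indicator fun _ => (1 : ℝ))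

/-- A property holds quasi-surely if it holds outside a set `N` with `E(I_N) = 0`. -/
def CondSLExp.QS (S : CondSLExp Ω) (P : Ω → Prop) : Prop :=
  ∃ N : Set Ω, S.V N = 0 ∧ ∀ ω ∉ N, P ω

/-- `X` is independent of `F n`: `X` is independent of `I_A` under `E` for every
`A ∈ F n`, i.e. `E(φ(I_A, X)) = E(φ̄(I_A))` where `φ̄(x) := E(φ(x, X))`. -/
def CondSLExp.IndepOf (S : CondSLExp Ω) (X : Ω → ℝ) (n : ℕ) : Prop :=
  ∀ A : Set Ω, MeasurableSet[S.F n] A → ∀ φ : ℝ → ℝ → ℝ,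
    (fun ω => φ (A.indicator (fun _ => (1 : ℝ)) ω) (X ω)) ∈ S.H →
    (∀ x : ℝ, (fun ω => φ x (X ω)) ∈ S.H) →
    (fun ω => S.E fun ω' => φ (A.indicator (fun _ => (1 : ℝ)) ω) (X ω')) ∈ S.H →
    S.E (fun ω => φ (A.indicator (fun _ => (1 : ℝ)) ω) (X ω)) =
      S.E (fun ω => S.E fun ω' => φ (A.indicator (fun _ => (1 : ℝ)) ω) (X ω'))

/-- Membership in `L_b¹`, via the characterization
`L_b¹ = {X ∈ L¹ : lim_n E(|X| I_{|X|>n}) = 0}`. -/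
def CondSLExp.InLb1 (S : CondSLExp Ω) (X : Ω → ℝ) : Prop :=
  Tendsto (fun n : ℕ => S.E fun ω => if (n : ℝ) < |X ω| then |X ω| else 0)
    atTop (nhds 0)

namespace CondSLExp

variable {Ω : Type*} [MeasurableSpace Ω] (S : CondSLExp Ω)

lemma E_zero : S.E (fun _ => (0:ℝ)) = 0 := by
  have h := S.fatou (fun _ => fun _ => (0:ℝ)) (fun _ => S.const_mem 0)
    (fun ω => antitone_const) (fun ω => tendsto_const_nhds)
  exact tendsto_nhds_unique tendsto_const_nhds h

lemma Et_const (t : ℕ) (c : ℝ) : S.Et t (fun _ => c) = fun _ => c :=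
  S.proj t _ (S.const_mem c) measurable_const

section NE
variable [Nonempty Ω]

noncomputable def w0 : Ω := Classical.arbitrary Ω

lemma E_eq {Y : Ω → ℝ} (hY : Y ∈ S.H) : S.E Y = S.Et 0 Y (w0 (Ω := Ω)) :=
  (S.E0_eq Y hY _).symm

lemma E_mono {Y Z : Ω → ℝ} (hY : Y ∈ S.H) (hZ : Z ∈ S.H) (h : ∀ ω, Y ω ≤ Z ω) :
    S.E Y ≤ S.E Z := by
  rw [S.E_eq hY, S.E_eq hZ]; exact S.mono 0 Y hY Z hZ h _

lemma E_le_add {Y Z : Ω → ℝ} (hY : Y ∈ S.H) (hZ : Z ∈ S.H) :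
    S.E (Y + Z) ≤ S.E Y + S.E Z := by
  rw [S.E_eq (S.add_mem Y hY Z hZ), S.E_eq hY, S.E_eq hZ]
  exact S.subadd 0 Y hY Z hZ _

lemma E_Et {Y : Ω → ℝ} (t : ℕ) (hY : Y ∈ S.H) : S.E (S.Et t Y) = S.E Y := by
  rw [S.E_eq (S.Et_mem t Y hY), S.E_eq hY, S.tower 0 t (Nat.zero_le t) Y hY]

end NE

lemma Et_nonneg (t : ℕ) {W : Ω → ℝ} (hW : W ∈ S.H) (h : ∀ ω, 0 ≤ W ω) :
    ∀ ω, 0 ≤ S.Et t W ω := by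
  intro ω
  have := S.mono t (fun _ => 0) (S.const_mem 0) W hW h ω
  rwa [S.Et_const t 0] at this

lemma neg_mem {Y : Ω → ℝ} (hY : Y ∈ S.H) : (fun ω => -(Y ω)) ∈ S.H := by
  have : (fun ω => -(Y ω)) = (-1 : ℝ) • Y := by funext ω; simp
  rw [this]; exact S.smul_mem (-1) Y hY

lemma Et_add_meas (t : ℕ) {Y Z : Ω → ℝ} (hY : Y ∈ S.H) (hZ : Z ∈ S.H)
    (hZm : Measurable[S.F t] Z) :
    S.Et t (Y + Z) = fun ω => S.Et t Y ω + Z ω := by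
  funext ω
  have hZp : S.Et t Z = Z := S.proj t Z hZ hZm
  have h1 : S.Et t (Y + Z) ω ≤ S.Et t Y ω + Z ω := by
    have := S.subadd t Y hY Z hZ ω
    rwa [hZp] at this
  have hnZ : (fun ω => -(Z ω)) ∈ S.H := S.neg_mem hZ
  have hnZm : Measurable[S.F t] (fun ω => -(Z ω)) := hZm.neg
  have hnZp : S.Et t (fun ω => -(Z ω)) = fun ω => -(Z ω) := S.proj t _ hnZ hnZm
  have h2 : S.Et t Y ω ≤ S.Et t (Y + Z) ω + -(Z ω) := by
    have heq : Y = (Y + Z) + (fun ω => -(Z ω)) := by funext ω'; simp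
    have := S.subadd t (Y + Z) (S.add_mem Y hY Z hZ) (fun ω => -(Z ω)) hnZ ω
    rw [← heq, hnZp] at this
    exact this
  linarith

lemma Et_add_const (t : ℕ) {Y : Ω → ℝ} (hY : Y ∈ S.H) (c : ℝ) :
    S.Et t (fun ω => Y ω + c) = fun ω => S.Et t Y ω + c := by
  have : (fun ω => Y ω + c) = Y + (fun _ => c) := rfl
  rw [this, S.Et_add_meas t hY (S.const_mem c) measurable_const]

lemma E_add_const [Nonempty Ω] {Y : Ω → ℝ} (hY : Y ∈ S.H) (c : ℝ) :
    S.E (fun ω => Y ω + c) = S.E Y + c := by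
  have hm : (fun ω => Y ω + c) ∈ S.H := S.add_mem Y hY _ (S.const_mem c)
  rw [S.E_eq hm, S.E_eq hY, S.Et_add_const 0 hY c]

lemma indicator_mem {A : Set Ω} (hA : MeasurableSet A) :
    (A.indicator fun _ => (1:ℝ)) ∈ S.H := S.indmul_mem A hA _ (S.const_mem 1)

lemma E_smul [Nonempty Ω] {Y : Ω → ℝ} (hY : Y ∈ S.H) {c : ℝ} (hc : 0 ≤ c) :
    S.E (fun ω => c * Y ω) = c * S.E Y := by
  have hcY : (fun ω => c * Y ω) ∈ S.H := by
    have : (fun ω => c * Y ω) = c • Y := by funext ω; simp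
    rw [this]; exact S.smul_mem c Y hY
  have h := S.poshom 0 (fun _ => c) (S.const_mem c) measurable_const Y hY hcY (w0 (Ω := Ω))
  rw [S.E_eq hcY, h, max_eq_left hc, max_eq_right (neg_nonpos.mpr hc), S.E_eq hY]
  ring

lemma V_nonneg [Nonempty Ω] {A : Set Ω} (hA : MeasurableSet A) : 0 ≤ S.V A := by
  have := S.E_mono (S.const_mem 0) (S.indicator_mem hA) (fun ω => by
    by_cases h : ω ∈ A <;> simp [Set.indicator_apply, h])
  rwa [S.E_zero] at this

end CondSLExp

namespace CondSLExp

variable {Ω : Type*} [MeasurableSpace Ω] (S : CondSLExp Ω)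

lemma pos_part_mem {W : Ω → ℝ} (hW : W ∈ S.H) : (fun ω => max (W ω) 0) ∈ S.H := by
  have : (fun ω => max (W ω) 0) = (1/2 : ℝ) • (W + fun ω => |W ω|) := by
    funext ω
    rcases le_or_gt 0 (W ω) with h | h
    · simp [abs_of_nonneg h, max_eq_left h]; ring
    · simp [abs_of_neg h, max_eq_right h.le]
  rw [this]
  exact S.smul_mem _ _ (S.add_mem W hW _ (S.abs_mem W hW))

lemma neg_part_mem {W : Ω → ℝ} (hW : W ∈ S.H) : (fun ω => max (-(W ω)) 0) ∈ S.H := by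
  have := S.pos_part_mem (S.neg_mem hW)
  simpa using this

lemma sum_mem {s : Finset ℕ} {f : ℕ → Ω → ℝ} (hf : ∀ i ∈ s, f i ∈ S.H) :
    (fun ω => ∑ i ∈ s, f i ω) ∈ S.H := by
  classical
  induction s using Finset.induction with
  | empty => simpa using S.const_mem 0
  | insert a s' hnotmem ih =>
    have h1 : f a ∈ S.H := hf a (Finset.mem_insert_self a s')
    have h2 : (fun ω => ∑ i ∈ s', f i ω) ∈ S.H :=
      ih (fun i hi => hf i (Finset.mem_insert_of_mem hi))
    have : (fun ω => ∑ i ∈ insert a s', f i ω) = f a + fun ω => ∑ i ∈ s', f i ω := by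
      funext ω; simp [Finset.sum_insert hnotmem]
    rw [this]; exact S.add_mem _ h1 _ h2

lemma E_sum_le [Nonempty Ω] {s : Finset ℕ} {f : ℕ → Ω → ℝ} (hf : ∀ i ∈ s, f i ∈ S.H) :
    S.E (fun ω => ∑ i ∈ s, f i ω) ≤ ∑ i ∈ s, S.E (f i) := by
  classical
  induction s using Finset.induction with
  | empty => simp [S.E_zero]
  | insert a s' hnotmem ih =>
    have h1 : f a ∈ S.H := hf a (Finset.mem_insert_self a s')
    have h2 : (fun ω => ∑ i ∈ s', f i ω) ∈ S.H :=
      S.sum_mem (fun i hi => hf i (Finset.mem_insert_of_mem hi))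
    have heq : (fun ω => ∑ i ∈ insert a s', f i ω) = f a + fun ω => ∑ i ∈ s', f i ω := by
      funext ω; simp [Finset.sum_insert hnotmem]
    rw [heq, Finset.sum_insert hnotmem]
    calc S.E (f a + fun ω => ∑ i ∈ s', f i ω) ≤ S.E (f a) + S.E (fun ω => ∑ i ∈ s', f i ω) :=
          S.E_le_add h1 h2
      _ ≤ S.E (f a) + ∑ i ∈ s', S.E (f i) := by
          have := ih (fun i hi => hf i (Finset.mem_insert_of_mem hi))
          linarith

lemma V_markov [Nonempty Ω] {A : Set Ω} (hA : MeasurableSet A) {W : Ω → ℝ} (hW : W ∈ S.H)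
    (hW0 : ∀ ω, 0 ≤ W ω) {ε : ℝ} (hε : 0 ≤ ε) (h : ∀ ω ∈ A, ε ≤ W ω) :
    ε * S.V A ≤ S.E W := by
  have hI : (A.indicator fun _ => (1:ℝ)) ∈ S.H := S.indicator_mem hA
  have hle : ∀ ω, ε * (A.indicator fun _ => (1:ℝ)) ω ≤ W ω := by
    intro ω
    by_cases hω : ω ∈ A
    · simpa [Set.indicator_of_mem hω] using h ω hω
    · simpa [Set.indicator_of_notMem hω] using hW0 ω
  have hεI : (fun ω => ε * (A.indicator fun _ => (1:ℝ)) ω) ∈ S.H := by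
    have : (fun ω => ε * (A.indicator fun _ => (1:ℝ)) ω) = ε • (A.indicator fun _ => (1:ℝ)) := by
      funext ω; simp
    rw [this]; exact S.smul_mem _ _ hI
  calc ε * S.V A = S.E (fun ω => ε * (A.indicator fun _ => (1:ℝ)) ω) := (S.E_smul hI hε).symm
    _ ≤ S.E W := S.E_mono hεI hW hle

lemma V_union_le [Nonempty Ω] {A B : Set Ω} (hA : MeasurableSet A) (hB : MeasurableSet B) :
    S.V (A ∪ B) ≤ S.V A + S.V B := by
  have h1 : ((A ∪ B).indicator fun _ => (1:ℝ)) ∈ S.H := S.indicator_mem (hA.union hB)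
  have h2 := S.add_mem _ (S.indicator_mem hA) _ (S.indicator_mem hB)
  have hle : ∀ ω, ((A ∪ B).indicator fun _ => (1:ℝ)) ω ≤
      ((A.indicator fun _ => (1:ℝ)) + (B.indicator fun _ => (1:ℝ))) ω := by
    intro ω
    by_cases ha : ω ∈ A <;> by_cases hb : ω ∈ B <;>
      simp [Set.indicator_apply, ha, hb]
  calc S.V (A ∪ B) ≤ S.E ((A.indicator fun _ => (1:ℝ)) + (B.indicator fun _ => (1:ℝ))) :=
        S.E_mono h1 h2 hle
    _ ≤ S.V A + S.V B := S.E_le_add (S.indicator_mem hA) (S.indicator_mem hB)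

lemma V_iUnion_null [Nonempty Ω] {A : ℕ → Set Ω} (hA : ∀ k, MeasurableSet (A k))
    (hnull : ∀ k, S.V (A k) = 0) : S.V (⋃ k, A k) = 0 := by
  classical
  set B : ℕ → Set Ω := fun i => ⋃ k ∈ Finset.range (i+1), A k with hB
  have hBmeas : ∀ i, MeasurableSet (B i) := fun i => by
    exact MeasurableSet.biUnion (Finset.range (i+1)).countable_toSet (fun k _ => hA k)
  have hBnull : ∀ i, S.V (B i) = 0 := by
    intro i
    induction i with
    | zero =>
      have : B 0 = A 0 := by simp [hB]
      rw [this]; exact hnull 0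
    | succ j ihj =>
      have hBs : B (j+1) = A (j+1) ∪ B j := by
        simp only [hB, Finset.range_add_one, Finset.set_biUnion_insert]
      have hle := S.V_union_le (hA (j+1)) (hBmeas j)
      rw [hBs]
      have hge := S.V_nonneg ((hA (j+1)).union (hBmeas j))
      rw [ihj, hnull (j+1)] at hle
      linarith
  -- decreasing remainder indicators
  set U : Set Ω := ⋃ k, A k with hU
  have hUmeas : MeasurableSet U := MeasurableSet.iUnion hA
  set Z : ℕ → Ω → ℝ := fun i => (U \ B i).indicator fun _ => (1:ℝ) with hZ
  have hZmem : ∀ i, Z i ∈ S.H := fun i => S.indicator_mem (hUmeas.diff (hBmeas i))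
  have hBmono : Monotone B := by
    intro i j hij ω hω
    simp only [hB, Set.mem_iUnion] at hω ⊢
    obtain ⟨k, hk, hmem⟩ := hω
    exact ⟨k, by simp only [Finset.mem_range] at hk ⊢; omega, hmem⟩
  have hZanti : ∀ ω, Antitone fun i => Z i ω := by
    intro ω i j hij
    simp only [hZ]
    by_cases hj : ω ∈ U \ B j
    · have hi : ω ∈ U \ B i := ⟨hj.1, fun h => hj.2 (hBmono hij h)⟩
      simp [Set.indicator_of_mem hj, Set.indicator_of_mem hi]
    · simp only [Set.indicator_of_notMem hj]
      by_cases hi : ω ∈ U \ B i <;> simp [Set.indicator_apply, hi]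
  have hZtend : ∀ ω, Tendsto (fun i => Z i ω) atTop (nhds 0) := by
    intro ω
    by_cases hω : ω ∈ U
    · obtain ⟨k, hk⟩ := Set.mem_iUnion.mp hω
      have : ∀ i ≥ k, Z i ω = 0 := by
        intro i hi
        have : ω ∈ B i := by
          simp only [hB, Set.mem_iUnion]
          exact ⟨k, by simp [Finset.mem_range]; omega, hk⟩
        simp [hZ, Set.indicator_of_notMem, this]
      exact tendsto_atTop_of_eventually_const this
    · have : ∀ i, Z i ω = 0 := fun i => by
        simp [hZ, Set.indicator_apply, Set.mem_diff, hω]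
      simp only [this]; exact tendsto_const_nhds
  have hEZ := S.fatou Z hZmem hZanti hZtend
  have hVle : ∀ i, S.V U ≤ S.E (Z i) := by
    intro i
    have hle : ∀ ω, (U.indicator fun _ => (1:ℝ)) ω ≤ (Z i + (B i).indicator fun _ => (1:ℝ)) ω := by
      intro ω
      by_cases hω : ω ∈ U
      · by_cases hb : ω ∈ B i
        · simp [hZ, Set.indicator_apply, hω, hb]
        · simp [hZ, Set.indicator_apply, hω, hb]
      · have h1 : ω ∉ U \ B i := fun h => hω h.1
        by_cases hb : ω ∈ B i <;> simp [hZ, Set.indicator_apply, hω, hb]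
    calc S.V U ≤ S.E (Z i + (B i).indicator fun _ => (1:ℝ)) :=
          S.E_mono (S.indicator_mem hUmeas)
            (S.add_mem _ (hZmem i) _ (S.indicator_mem (hBmeas i))) hle
      _ ≤ S.E (Z i) + S.V (B i) := S.E_le_add (hZmem i) (S.indicator_mem (hBmeas i))
      _ = S.E (Z i) := by rw [hBnull i]; ring
  have h1 : S.V U ≤ 0 := ge_of_tendsto hEZ (Filter.Eventually.of_forall hVle)
  have h2 : 0 ≤ S.V U := S.V_nonneg hUmeas
  linarith

lemma null_of_nonneg_E_nonpos [Nonempty Ω] {g : Ω → ℝ} (hg : g ∈ S.H)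
    (hg0 : ∀ ω, 0 ≤ g ω) (hE : S.E g ≤ 0) : S.V {ω | g ω ≠ 0} = 0 := by
  have hgm : Measurable g := S.H_meas g hg
  have hset : {ω | g ω ≠ 0} = ⋃ k : ℕ, {ω | 1/(k+1 : ℝ) ≤ g ω} := by
    ext ω
    simp only [Set.mem_setOf_eq, Set.mem_iUnion]
    constructor
    · intro h
      have hpos : 0 < g ω := lt_of_le_of_ne (hg0 ω) (Ne.symm h)
      obtain ⟨k, hk⟩ := exists_nat_one_div_lt hpos
      exact ⟨k, hk.le⟩
    · rintro ⟨k, hk⟩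
      have : (0:ℝ) < 1/(k+1:ℝ) := by positivity
      linarith [lt_of_lt_of_le this hk]
  rw [hset]
  apply S.V_iUnion_null
  · intro k
    exact measurableSet_le measurable_const hgm
  · intro k
    have hkpos : (0:ℝ) < 1/(k+1:ℝ) := by positivity
    have hmark := S.V_markov (measurableSet_le measurable_const hgm) hg hg0 hkpos.le
      (fun ω hω => hω)
    have hnn := S.V_nonneg (A := {ω | 1/(k+1:ℝ) ≤ g ω}) (measurableSet_le measurable_const hgm)
    nlinarith [lt_of_lt_of_le hkpos (le_refl (1/(k+1:ℝ)))]

end CondSLExp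

namespace CondSLExp

variable {Ω : Type*} [MeasurableSpace Ω] (S : CondSLExp Ω)

lemma indep_indicator_shift [Nonempty Ω] {Xf : Ω → ℝ} (hX : Xf ∈ S.H) {t : ℕ}
    (hI : S.IndepOf Xf t) {C : Set Ω} (hC : MeasurableSet[S.F t] C) (c : ℝ) :
    S.E (C.indicator (fun ω => Xf ω + c)) =
      S.E (fun ω => (S.E Xf + c) * (C.indicator (fun _ => (1:ℝ)) ω)) := by
  have hXc : (fun ω => Xf ω + c) ∈ S.H := S.add_mem Xf hX _ (S.const_mem c)
  have hCm : MeasurableSet C := S.F_le t C hC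
  have h1eq : (fun ω => (C.indicator (fun _ => (1:ℝ)) ω) * (Xf ω + c)) =
      C.indicator (fun ω => Xf ω + c) := by
    funext ω
    by_cases hω : ω ∈ C <;> simp [Set.indicator_apply, hω]
  have h1 : (fun ω => (C.indicator (fun _ => (1:ℝ)) ω) * (Xf ω + c)) ∈ S.H := by
    rw [h1eq]; exact S.indmul_mem C hCm _ hXc
  have h2 : ∀ x : ℝ, (fun ω => x * (Xf ω + c)) ∈ S.H := by
    intro x
    have : (fun ω => x * (Xf ω + c)) = x • (fun ω => Xf ω + c) := by funext ω; simp
    rw [this]; exact S.smul_mem x _ hXc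
  have hfun : (fun ω => S.E fun ω' => (C.indicator (fun _ => (1:ℝ)) ω) * (Xf ω' + c)) =
      fun ω => (S.E Xf + c) * (C.indicator (fun _ => (1:ℝ)) ω) := by
    funext ω
    by_cases hω : ω ∈ C
    · simp only [Set.indicator_of_mem hω, one_mul, mul_one]
      exact S.E_add_const hX c
    · simp only [Set.indicator_of_notMem hω, zero_mul, mul_zero]
      exact S.E_zero
  have h3 : (fun ω => S.E fun ω' => (C.indicator (fun _ => (1:ℝ)) ω) * (Xf ω' + c)) ∈ S.H := by
    rw [hfun]
    have : (fun ω => (S.E Xf + c) * (C.indicator (fun _ => (1:ℝ)) ω)) =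
        (S.E Xf + c) • (C.indicator fun _ => (1:ℝ)) := by funext ω; simp
    rw [this]; exact S.smul_mem _ _ (S.indicator_mem hCm)
  have := hI C hC (fun x y => x * (y + c)) h1 h2 h3
  rw [h1eq, hfun] at this
  exact this

lemma E_ind_shift_Et [Nonempty Ω] {Xf : Ω → ℝ} (hX : Xf ∈ S.H) (t : ℕ)
    {C : Set Ω} (hC : MeasurableSet[S.F t] C) (c : ℝ) :
    S.E (C.indicator (fun ω => Xf ω + c)) =
      S.E (C.indicator (fun ω => S.Et t Xf ω + c)) := by
  have hXc : (fun ω => Xf ω + c) ∈ S.H := S.add_mem Xf hX _ (S.const_mem c)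
  have h1 := S.E_Et (Y := C.indicator (fun ω => Xf ω + c)) t (S.indmul_mem C (S.F_le t C hC) _ hXc)
  rw [← h1, S.locality t C hC _ hXc, S.Et_add_const t hX c]

lemma E_pos_part_Et [Nonempty Ω] {Xf : Ω → ℝ} (hX : Xf ∈ S.H) {t : ℕ}
    (hI : S.IndepOf Xf t) (hz : S.E Xf = 0) :
    S.E (fun ω => max (S.Et t Xf ω) 0) = 0 := by
  set W := S.Et t Xf with hW
  have hWmem : W ∈ S.H := S.Et_mem t Xf hX
  have hWm : Measurable[S.F t] W := S.Et_meas t Xf hX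
  have hWp : (fun ω => max (W ω) 0) ∈ S.H := S.pos_part_mem hWmem
  have hge : 0 ≤ S.E (fun ω => max (W ω) 0) := by
    have := S.E_mono (S.const_mem 0) hWp (fun ω => le_max_right _ _)
    rwa [S.E_zero] at this
  have hle : ∀ δ : ℝ, 0 < δ → S.E (fun ω => max (W ω) 0) ≤ δ := by
    intro δ hδ
    set C : Set Ω := {ω | δ < W ω} with hCdef
    have hC : MeasurableSet[S.F t] C := measurableSet_lt measurable_const hWm
    have hshift := S.indep_indicator_shift hX hI hC (-δ)
    rw [S.E_ind_shift_Et hX t hC (-δ), hz, zero_add] at hshift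
    -- RHS ≤ 0
    have hrhs : S.E (fun ω => -δ * (C.indicator (fun _ => (1:ℝ)) ω)) ≤ 0 := by
      have hmem : (fun ω => -δ * (C.indicator (fun _ => (1:ℝ)) ω)) ∈ S.H := by
        have : (fun ω => -δ * (C.indicator (fun _ => (1:ℝ)) ω)) =
            (-δ) • (C.indicator fun _ => (1:ℝ)) := by funext ω; simp
        rw [this]; exact S.smul_mem _ _ (S.indicator_mem (S.F_le t C hC))
      have := S.E_mono hmem (S.const_mem 0) (fun ω => by
        by_cases hω : ω ∈ C <;> simp [Set.indicator_apply, hω] <;> linarith)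
      rwa [S.E_zero] at this
    -- max (W ω) 0 - δ ≤ indicator
    have hWpδ : (fun ω => max (W ω) 0 + -δ) ∈ S.H := S.add_mem _ hWp _ (S.const_mem (-δ))
    have hindm : (C.indicator (fun ω => W ω + -δ)) ∈ S.H :=
      S.indmul_mem C (S.F_le t C hC) _ (S.add_mem _ hWmem _ (S.const_mem (-δ)))
    have hptw : ∀ ω, max (W ω) 0 + -δ ≤ (C.indicator (fun ω => W ω + -δ)) ω := by
      intro ω
      by_cases hω : ω ∈ C
      · have : δ < W ω := hω
        rw [Set.indicator_of_mem hω]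
        have : max (W ω) 0 = W ω := max_eq_left (by linarith)
        linarith [this.le]
      · have : ¬ (δ < W ω) := hω
        rw [Set.indicator_of_notMem hω]
        have h1 : max (W ω) 0 ≤ δ := max_le (by linarith [not_lt.mp this]) hδ.le
        linarith
    have hchain : S.E (fun ω => max (W ω) 0 + -δ) ≤ 0 := by
      calc S.E (fun ω => max (W ω) 0 + -δ) ≤ S.E (C.indicator (fun ω => W ω + -δ)) :=
            S.E_mono hWpδ hindm hptw
        _ = S.E (fun ω => -δ * (C.indicator (fun _ => (1:ℝ)) ω)) := hshift
        _ ≤ 0 := hrhs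
    rw [S.E_add_const hWp (-δ)] at hchain
    linarith
  by_contra hne
  have hpos : 0 < S.E (fun ω => max (W ω) 0) := lt_of_le_of_ne hge (Ne.symm hne)
  have := hle _ (half_pos hpos)
  linarith

lemma V_negset_null [Nonempty Ω] {Xf : Ω → ℝ} (hX : Xf ∈ S.H) {t : ℕ}
    (hI : S.IndepOf Xf t) (hz : S.E Xf = 0) {δ : ℝ} (hδ : 0 < δ) :
    S.V {ω | S.Et t Xf ω < -δ} = 0 := by
  set W := S.Et t Xf with hW
  have hWmem : W ∈ S.H := S.Et_mem t Xf hX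
  have hWm : Measurable[S.F t] W := S.Et_meas t Xf hX
  set A : Set Ω := {ω | W ω < -δ} with hAdef
  have hA : MeasurableSet[S.F t] A := measurableSet_lt hWm measurable_const
  have hAm : MeasurableSet A := S.F_le t A hA
  have hshift := S.indep_indicator_shift hX hI hA δ
  rw [S.E_ind_shift_Et hX t hA δ, hz, zero_add] at hshift
  have hEδ : S.E (fun ω => δ * (A.indicator (fun _ => (1:ℝ)) ω)) = δ * S.V A :=
    S.E_smul (S.indicator_mem hAm) hδ.le
  have hlhs : S.E (A.indicator (fun ω => W ω + δ)) ≤ 0 := by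
    have hmem : (A.indicator (fun ω => W ω + δ)) ∈ S.H :=
      S.indmul_mem A hAm _ (S.add_mem _ hWmem _ (S.const_mem δ))
    have := S.E_mono hmem (S.const_mem 0) (fun ω => by
      by_cases hω : ω ∈ A
      · have : W ω < -δ := hω
        rw [Set.indicator_of_mem hω]; linarith
      · rw [Set.indicator_of_notMem hω])
    rwa [S.E_zero] at this
  have hVle : δ * S.V A ≤ 0 := by rw [← hEδ, ← hshift]; exact hlhs
  have hVge : 0 ≤ S.V A := S.V_nonneg hAm
  nlinarith

lemma E_neg_part_Et [Nonempty Ω] {Xf : Ω → ℝ} (hX : Xf ∈ S.H) {t : ℕ}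
    (hI : S.IndepOf Xf t) (hz : S.E Xf = 0)
    (hr : (∃ c : ℝ, ∀ ω, c ≤ Xf ω) ∨ S.InLb1 Xf) :
    S.E (fun ω => max (-(S.Et t Xf ω)) 0) = 0 := by
  set W := S.Et t Xf with hW
  have hWmem : W ∈ S.H := S.Et_mem t Xf hX
  have hWm : Measurable[S.F t] W := S.Et_meas t Xf hX
  have hWn : (fun ω => max (-(W ω)) 0) ∈ S.H := S.neg_part_mem hWmem
  have hge : 0 ≤ S.E (fun ω => max (-(W ω)) 0) := by
    have := S.E_mono (S.const_mem 0) hWn (fun ω => le_max_right _ _)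
    rwa [S.E_zero] at this
  have hle : ∀ δ : ℝ, 0 < δ → S.E (fun ω => max (-(W ω)) 0) ≤ 2*δ := by
    intro δ hδ
    set A : Set Ω := {ω | W ω < -δ} with hAdef
    have hA : MeasurableSet[S.F t] A := measurableSet_lt hWm measurable_const
    have hAm : MeasurableSet A := S.F_le t A hA
    have hAnull : S.V A = 0 := S.V_negset_null hX hI hz hδ
    rcases hr with ⟨c, hc⟩ | hLb
    · -- lower bounded case
      have hWc : ∀ ω, c ≤ W ω := by
        intro ω
        have := S.mono t (fun _ => c) (S.const_mem c) Xf hX hc ω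
        rwa [S.Et_const t c] at this
      set b : ℝ := max (-c) 0 with hb
      have hb0 : 0 ≤ b := le_max_right _ _
      have hptw : ∀ ω, max (-(W ω)) 0 ≤ b * (A.indicator (fun _ => (1:ℝ)) ω) + δ := by
        intro ω
        by_cases hω : ω ∈ A
        · have h1 : W ω < -δ := hω
          rw [Set.indicator_of_mem hω, mul_one]
          have h2 : -(W ω) ≤ -c := by linarith [hWc ω]
          have h3 : -(W ω) ≤ b := le_trans h2 (le_max_left _ _)
          exact le_add_of_le_of_nonneg (max_le h3 hb0) hδ.le
        · have h1 : ¬ (W ω < -δ) := hω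
          rw [Set.indicator_of_notMem hω, mul_zero, zero_add]
          exact max_le (by linarith [not_lt.mp h1]) hδ.le
      have hmem : (fun ω => b * (A.indicator (fun _ => (1:ℝ)) ω) + δ) ∈ S.H := by
        refine S.add_mem _ ?_ _ (S.const_mem δ)
        have : (fun ω => b * (A.indicator (fun _ => (1:ℝ)) ω)) =
            b • (A.indicator fun _ => (1:ℝ)) := by funext ω; simp
        rw [this]; exact S.smul_mem _ _ (S.indicator_mem hAm)
      have hbI : (fun ω => b * (A.indicator (fun _ => (1:ℝ)) ω)) ∈ S.H := by
        have : (fun ω => b * (A.indicator (fun _ => (1:ℝ)) ω)) =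
            b • (A.indicator fun _ => (1:ℝ)) := by funext ω; simp
        rw [this]; exact S.smul_mem _ _ (S.indicator_mem hAm)
      calc S.E (fun ω => max (-(W ω)) 0) ≤
            S.E (fun ω => b * (A.indicator (fun _ => (1:ℝ)) ω) + δ) := S.E_mono hWn hmem hptw
        _ = S.E (fun ω => b * (A.indicator (fun _ => (1:ℝ)) ω)) + δ := S.E_add_const hbI δ
        _ = b * S.V A + δ := by rw [S.E_smul (S.indicator_mem hAm) hb0]; rfl
        _ ≤ 2*δ := by rw [hAnull]; linarith
    · -- L_b^1 case
      obtain ⟨n, hn⟩ := (hLb.eventually_lt_const hδ).exists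
      set g : Ω → ℝ := fun ω => if (n : ℝ) < |Xf ω| then |Xf ω| else 0 with hgdef
      have hgeq : g = Set.indicator {ω | (n:ℝ) < |Xf ω|} (fun ω => |Xf ω|) := by
        funext ω
        by_cases h : (n:ℝ) < |Xf ω| <;>
          simp [hgdef, Set.indicator_apply, Set.mem_setOf_eq, h]
      have hgmem : g ∈ S.H := by
        rw [hgeq]
        exact S.indmul_mem _ (measurableSet_lt measurable_const (S.H_meas Xf hX).abs) _
          (S.abs_mem Xf hX)
      have hg0 : ∀ ω, 0 ≤ g ω := by
        intro ω; simp only [hgdef]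
        split <;> simp [abs_nonneg]
      have hEtg0 : ∀ ω, 0 ≤ S.Et t g ω := S.Et_nonneg t hgmem hg0
      have hEtgmem : S.Et t g ∈ S.H := S.Et_mem t g hgmem
      -- W ≥ -n - Et g
      have hXlow : ∀ ω, -(g ω) + -(n:ℝ) ≤ Xf ω := by
        intro ω
        simp only [hgdef]
        split
        · rename_i h
          have := neg_abs_le (Xf ω)
          push_cast
          linarith
        · rename_i h
          have := (abs_le.mp (not_lt.mp h)).1
          linarith
      have hWlow : ∀ ω, -(S.Et t g ω) + -(n:ℝ) ≤ W ω := by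
        intro ω
        have hL : (fun ω => -(g ω) + -(n:ℝ)) ∈ S.H :=
          S.add_mem _ (S.neg_mem hgmem) _ (S.const_mem _)
        have h1 := S.mono t _ hL Xf hX hXlow ω
        have h2 : S.Et t (fun ω => -(g ω) + -(n:ℝ)) =
            fun ω => S.Et t (fun ω => -(g ω)) ω + -(n:ℝ) :=
          S.Et_add_const t (S.neg_mem hgmem) _
        have h3 : -(S.Et t g ω) ≤ S.Et t (fun ω => -(g ω)) ω := by
          have hsum : (fun ω' => -(g ω')) + g = fun _ => (0:ℝ) := by funext ω'; simp
          have h4 := S.subadd t (fun ω' => -(g ω')) (S.neg_mem hgmem) g hgmem ω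
          rw [hsum, S.Et_const t 0] at h4
          have h5 : (0:ℝ) ≤ S.Et t (fun ω' => -(g ω')) ω + S.Et t g ω := h4
          linarith
        rw [h2] at h1
        have h1' : S.Et t (fun ω => -(g ω)) ω + -(n:ℝ) ≤ W ω := h1
        linarith
      have hptw : ∀ ω, max (-(W ω)) 0 ≤
          (A.indicator (fun ω => (n:ℝ) + S.Et t g ω)) ω + δ := by
        intro ω
        by_cases hω : ω ∈ A
        · have h1 : W ω < -δ := hω
          rw [Set.indicator_of_mem hω]
          have h2 : -(W ω) ≤ (n:ℝ) + S.Et t g ω := by linarith [hWlow ω]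
          have h3 : (0:ℝ) ≤ (n:ℝ) + S.Et t g ω := by
            have := hEtg0 ω
            have : (0:ℝ) ≤ (n:ℝ) := Nat.cast_nonneg n
            linarith
          exact le_add_of_le_of_nonneg (max_le h2 h3) hδ.le
        · have h1 : ¬ (W ω < -δ) := hω
          rw [Set.indicator_of_notMem hω, zero_add]
          exact max_le (by linarith [not_lt.mp h1]) hδ.le
      have hnEtg : (fun ω => (n:ℝ) + S.Et t g ω) ∈ S.H :=
        S.add_mem _ (S.const_mem _) _ hEtgmem
      have hindmem : (A.indicator (fun ω => (n:ℝ) + S.Et t g ω)) ∈ S.H :=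
        S.indmul_mem A hAm _ hnEtg
      have hnImem : (fun ω => (n:ℝ) * (A.indicator (fun _ => (1:ℝ)) ω)) ∈ S.H := by
        have : (fun ω => (n:ℝ) * (A.indicator (fun _ => (1:ℝ)) ω)) =
            (n:ℝ) • (A.indicator fun _ => (1:ℝ)) := by funext ω; simp
        rw [this]; exact S.smul_mem _ _ (S.indicator_mem hAm)
      have hstep : S.E (A.indicator (fun ω => (n:ℝ) + S.Et t g ω)) ≤ S.E g := by
        have hptw2 : ∀ ω, (A.indicator (fun ω => (n:ℝ) + S.Et t g ω)) ω ≤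
            ((fun ω => (n:ℝ) * (A.indicator (fun _ => (1:ℝ)) ω)) + S.Et t g) ω := by
          intro ω
          by_cases hω : ω ∈ A
          · simp [Set.indicator_of_mem hω, Pi.add_apply]
          · simp only [Set.indicator_of_notMem hω, Pi.add_apply,
              Set.indicator_of_notMem hω, mul_zero, zero_add]
            exact hEtg0 ω
        calc S.E (A.indicator (fun ω => (n:ℝ) + S.Et t g ω)) ≤
              S.E ((fun ω => (n:ℝ) * (A.indicator (fun _ => (1:ℝ)) ω)) + S.Et t g) :=
              S.E_mono hindmem (S.add_mem _ hnImem _ hEtgmem) hptw2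
          _ ≤ S.E (fun ω => (n:ℝ) * (A.indicator (fun _ => (1:ℝ)) ω)) + S.E (S.Et t g) :=
              S.E_le_add hnImem hEtgmem
          _ = (n:ℝ) * S.V A + S.E g := by
              rw [S.E_smul (S.indicator_mem hAm) (Nat.cast_nonneg n), S.E_Et t hgmem]; rfl
          _ = S.E g := by rw [hAnull]; ring
      calc S.E (fun ω => max (-(W ω)) 0) ≤
            S.E (fun ω => (A.indicator (fun ω => (n:ℝ) + S.Et t g ω)) ω + δ) :=
            S.E_mono hWn (S.add_mem _ hindmem _ (S.const_mem δ)) hptw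
        _ = S.E (A.indicator (fun ω => (n:ℝ) + S.Et t g ω)) + δ := S.E_add_const hindmem δ
        _ ≤ S.E g + δ := by linarith
        _ ≤ 2*δ := by
            have : S.E g < δ := hn
            linarith
  by_contra hne
  have hpos : 0 < S.E (fun ω => max (-(W ω)) 0) := lt_of_le_of_ne hge (Ne.symm hne)
  have := hle (S.E (fun ω => max (-(W ω)) 0) / 4) (by linarith)
  linarith

end CondSLExp

namespace CondSLExp

variable {Ω : Type*} [MeasurableSpace Ω] (S : CondSLExp Ω)

lemma sum_meas {X : ℕ → Ω → ℝ} (hadapt : ∀ i, 1 ≤ i → Measurable[S.F i] (X i)) (n : ℕ) :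
    Measurable[S.F n] fun ω => ∑ i ∈ Finset.Icc 1 n, X i ω := by
  apply Finset.measurable_sum
  intro i hi
  obtain ⟨h1, h2⟩ := Finset.mem_Icc.mp hi
  exact (hadapt i h1).mono (S.F_mono h2) le_rfl

lemma sandwich_upper {X : ℕ → Ω → ℝ} (hmem : ∀ i, 1 ≤ i → X i ∈ S.H)
    (hadapt : ∀ i, 1 ≤ i → Measurable[S.F i] (X i)) (n : ℕ) :
    ∀ m, n ≤ m → ∀ ω,
      S.Et n (fun ω' => ∑ i ∈ Finset.Icc 1 m, X i ω') ω ≤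
        (∑ i ∈ Finset.Icc 1 n, X i ω) +
          ∑ i ∈ Finset.Icc (n+1) m, S.Et n (fun ω' => max (S.Et (i-1) (X i) ω') 0) ω := by
  have hSmem : ∀ k, (fun ω' => ∑ i ∈ Finset.Icc 1 k, X i ω') ∈ S.H := fun k =>
    S.sum_mem (fun i hi => hmem i (Finset.mem_Icc.mp hi).1)
  intro m hm
  induction m, hm using Nat.le_induction with
  | base =>
    intro ω
    rw [S.proj n _ (hSmem n) (S.sum_meas hadapt n)]
    rw [Finset.Icc_eq_empty (by omega : ¬ n+1 ≤ n)]
    simp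
  | succ m hm ih =>
    intro ω
    have h1m : 1 ≤ m + 1 := by omega
    have hXmem := hmem (m+1) h1m
    have hW : S.Et m (X (m+1)) ∈ S.H := S.Et_mem m _ hXmem
    have hWp : (fun ω' => max (S.Et m (X (m+1)) ω') 0) ∈ S.H := S.pos_part_mem hW
    have hsplit : (fun ω' => ∑ i ∈ Finset.Icc 1 (m+1), X i ω') =
        X (m+1) + (fun ω' => ∑ i ∈ Finset.Icc 1 m, X i ω') := by
      funext ω'
      rw [Finset.sum_Icc_succ_top (by omega : 1 ≤ m+1), Pi.add_apply]
      ring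
    have htower := (S.tower n m hm _ (hSmem (m+1))).symm
    have hEtm : S.Et m (fun ω' => ∑ i ∈ Finset.Icc 1 (m+1), X i ω') =
        fun ω' => S.Et m (X (m+1)) ω' + (∑ i ∈ Finset.Icc 1 m, X i ω') := by
      rw [hsplit]
      exact S.Et_add_meas m hXmem (hSmem m) (S.sum_meas hadapt m)
    have hform : (fun ω' => S.Et m (X (m+1)) ω' + (∑ i ∈ Finset.Icc 1 m, X i ω')) =
        S.Et m (X (m+1)) + (fun ω' => ∑ i ∈ Finset.Icc 1 m, X i ω') := rfl
    have hsub := S.subadd n _ hW _ (hSmem m) ω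
    have hmono := S.mono n _ hW _ hWp (fun ω' => le_max_left _ _) ω
    have key : S.Et n (fun ω' => ∑ i ∈ Finset.Icc 1 (m+1), X i ω') ω ≤
        S.Et n (fun ω' => max (S.Et m (X (m+1)) ω') 0) ω +
          S.Et n (fun ω' => ∑ i ∈ Finset.Icc 1 m, X i ω') ω := by
      calc S.Et n (fun ω' => ∑ i ∈ Finset.Icc 1 (m+1), X i ω') ω
          = S.Et n (S.Et m (fun ω' => ∑ i ∈ Finset.Icc 1 (m+1), X i ω')) ω := by rw [← htower]
        _ = S.Et n (S.Et m (X (m+1)) + (fun ω' => ∑ i ∈ Finset.Icc 1 m, X i ω')) ω := by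
            rw [hEtm, hform]
        _ ≤ S.Et n (S.Et m (X (m+1))) ω + S.Et n (fun ω' => ∑ i ∈ Finset.Icc 1 m, X i ω') ω :=
            hsub
        _ ≤ S.Et n (fun ω' => max (S.Et m (X (m+1)) ω') 0) ω +
              S.Et n (fun ω' => ∑ i ∈ Finset.Icc 1 m, X i ω') ω := by linarith
    have hsum : ∑ i ∈ Finset.Icc (n+1) (m+1), S.Et n (fun ω' => max (S.Et (i-1) (X i) ω') 0) ω =
        (∑ i ∈ Finset.Icc (n+1) m, S.Et n (fun ω' => max (S.Et (i-1) (X i) ω') 0) ω) +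
          S.Et n (fun ω' => max (S.Et m (X (m+1)) ω') 0) ω := by
      rw [Finset.sum_Icc_succ_top (by omega : n+1 ≤ m+1)]
      norm_num
    rw [hsum]
    linarith [ih ω]

lemma sandwich_lower {X : ℕ → Ω → ℝ} (hmem : ∀ i, 1 ≤ i → X i ∈ S.H)
    (hadapt : ∀ i, 1 ≤ i → Measurable[S.F i] (X i)) (n : ℕ) :
    ∀ m, n ≤ m → ∀ ω,
      (∑ i ∈ Finset.Icc 1 n, X i ω) -
          ∑ i ∈ Finset.Icc (n+1) m, S.Et n (fun ω' => max (-(S.Et (i-1) (X i) ω')) 0) ω ≤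
        S.Et n (fun ω' => ∑ i ∈ Finset.Icc 1 m, X i ω') ω := by
  have hSmem : ∀ k, (fun ω' => ∑ i ∈ Finset.Icc 1 k, X i ω') ∈ S.H := fun k =>
    S.sum_mem (fun i hi => hmem i (Finset.mem_Icc.mp hi).1)
  intro m hm
  induction m, hm using Nat.le_induction with
  | base =>
    intro ω
    rw [S.proj n _ (hSmem n) (S.sum_meas hadapt n)]
    rw [Finset.Icc_eq_empty (by omega : ¬ n+1 ≤ n)]
    simp
  | succ m hm ih =>
    intro ω
    have h1m : 1 ≤ m + 1 := by omega
    have hXmem := hmem (m+1) h1m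
    have hW : S.Et m (X (m+1)) ∈ S.H := S.Et_mem m _ hXmem
    have hWm : (fun ω' => max (-(S.Et m (X (m+1)) ω')) 0) ∈ S.H := S.neg_part_mem hW
    have hnW : (fun ω' => -(S.Et m (X (m+1)) ω')) ∈ S.H := S.neg_mem hW
    have hsplit : (fun ω' => ∑ i ∈ Finset.Icc 1 (m+1), X i ω') =
        X (m+1) + (fun ω' => ∑ i ∈ Finset.Icc 1 m, X i ω') := by
      funext ω'
      rw [Finset.sum_Icc_succ_top (by omega : 1 ≤ m+1), Pi.add_apply]
      ring
    have htower := (S.tower n m hm _ (hSmem (m+1))).symm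
    have hEtm : S.Et m (fun ω' => ∑ i ∈ Finset.Icc 1 (m+1), X i ω') =
        S.Et m (X (m+1)) + (fun ω' => ∑ i ∈ Finset.Icc 1 m, X i ω') := by
      rw [hsplit]
      exact S.Et_add_meas m hXmem (hSmem m) (S.sum_meas hadapt m)
    have hG : S.Et m (X (m+1)) + (fun ω' => ∑ i ∈ Finset.Icc 1 m, X i ω') ∈ S.H :=
      S.add_mem _ hW _ (hSmem m)
    have hrecover : (S.Et m (X (m+1)) + (fun ω' => ∑ i ∈ Finset.Icc 1 m, X i ω')) +
        (fun ω' => -(S.Et m (X (m+1)) ω')) = fun ω' => ∑ i ∈ Finset.Icc 1 m, X i ω' := by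
      funext ω'
      simp [Pi.add_apply]
    have hsub := S.subadd n _ hG _ hnW ω
    rw [hrecover] at hsub
    have hmono := S.mono n _ hnW _ hWm (fun ω' => le_max_left _ _) ω
    have key : S.Et n (fun ω' => ∑ i ∈ Finset.Icc 1 m, X i ω') ω -
        S.Et n (fun ω' => max (-(S.Et m (X (m+1)) ω')) 0) ω ≤
        S.Et n (fun ω' => ∑ i ∈ Finset.Icc 1 (m+1), X i ω') ω := by
      have h1 : S.Et n (fun ω' => ∑ i ∈ Finset.Icc 1 (m+1), X i ω') ω =
          S.Et n (S.Et m (X (m+1)) + (fun ω' => ∑ i ∈ Finset.Icc 1 m, X i ω')) ω := by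
        rw [htower, hEtm]
      rw [h1]
      linarith
    have hsum : ∑ i ∈ Finset.Icc (n+1) (m+1), S.Et n (fun ω' => max (-(S.Et (i-1) (X i) ω')) 0) ω =
        (∑ i ∈ Finset.Icc (n+1) m, S.Et n (fun ω' => max (-(S.Et (i-1) (X i) ω')) 0) ω) +
          S.Et n (fun ω' => max (-(S.Et m (X (m+1)) ω')) 0) ω := by
      rw [Finset.sum_Icc_succ_top (by omega : n+1 ≤ m+1)]
      norm_num
    rw [hsum]
    linarith [ih ω]

end CondSLExp


/-- if `X_i ∈ H_i`, `X_i` is independent of `F_{i-1}`, each `X_i` is lower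
bounded or in `L_b¹`, and `E(X_i) = 0` for all `i`, then the partial sums
`S_j = X_1 + ⋯ + X_j` form an `SL`-martingale: `E_n(S_m) = S_n` (q.s.) for all `n ≤ m`. -/
theorem partialSums_slMartingale (S : CondSLExp Ω) (X : ℕ → Ω → ℝ)
    (hmem : ∀ i, 1 ≤ i → X i ∈ S.H)
    (hadapt : ∀ i, 1 ≤ i → Measurable[S.F i] (X i))
    (hind : ∀ i, 1 ≤ i → S.IndepOf (X i) (i - 1))
    (hreg : ∀ i, 1 ≤ i → ((∃ c : ℝ, ∀ ω, c ≤ X i ω) ∨ S.InLb1 (X i)))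
    (hzero : ∀ i, 1 ≤ i → S.E (X i) = 0) :
    ∀ n m : ℕ, n ≤ m →
      S.QS fun ω =>
        S.Et n (fun ω' => ∑ i ∈ Finset.Icc 1 m, X i ω') ω =
          ∑ i ∈ Finset.Icc 1 n, X i ω := by 
  intro n m hnm
  rcases isEmpty_or_nonempty Ω with hE | hNE
  · refine ⟨∅, ?_, fun ω _ => (hE.false ω).elim⟩
    show S.E ((∅ : Set Ω).indicator fun _ => (1:ℝ)) = 0
    rw [Set.indicator_empty]
    exact S.E_zero
  · -- nonempty case
    have hone : ∀ i ∈ Finset.Icc (n+1) m, 1 ≤ i := fun i hi => by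
      have := (Finset.mem_Icc.mp hi).1; omega
    -- memberships
    have hWp : ∀ i, 1 ≤ i → (fun ω' => max (S.Et (i-1) (X i) ω') 0) ∈ S.H := fun i hi =>
      S.pos_part_mem (S.Et_mem (i-1) _ (hmem i hi))
    have hWm : ∀ i, 1 ≤ i → (fun ω' => max (-(S.Et (i-1) (X i) ω')) 0) ∈ S.H := fun i hi =>
      S.neg_part_mem (S.Et_mem (i-1) _ (hmem i hi))
    have hfmem : ∀ i, 1 ≤ i →
        (fun ω => S.Et n (fun ω' => max (S.Et (i-1) (X i) ω') 0) ω +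
          S.Et n (fun ω' => max (-(S.Et (i-1) (X i) ω')) 0) ω) ∈ S.H := fun i hi =>
      S.add_mem _ (S.Et_mem n _ (hWp i hi)) _ (S.Et_mem n _ (hWm i hi))
    set g : Ω → ℝ := fun ω => ∑ i ∈ Finset.Icc (n+1) m,
        (S.Et n (fun ω' => max (S.Et (i-1) (X i) ω') 0) ω +
          S.Et n (fun ω' => max (-(S.Et (i-1) (X i) ω')) 0) ω) with hgdef
    have hgmem : g ∈ S.H := S.sum_mem (fun i hi => hfmem i (hone i hi))
    have hEtWp0 : ∀ i, 1 ≤ i → ∀ ω, 0 ≤ S.Et n (fun ω' => max (S.Et (i-1) (X i) ω') 0) ω :=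
      fun i hi => S.Et_nonneg n (hWp i hi) (fun ω' => le_max_right _ _)
    have hEtWm0 : ∀ i, 1 ≤ i → ∀ ω, 0 ≤ S.Et n (fun ω' => max (-(S.Et (i-1) (X i) ω')) 0) ω :=
      fun i hi => S.Et_nonneg n (hWm i hi) (fun ω' => le_max_right _ _)
    have hg0 : ∀ ω, 0 ≤ g ω := by
      intro ω
      apply Finset.sum_nonneg
      intro i hi
      have h1 := hEtWp0 i (hone i hi) ω
      have h2 := hEtWm0 i (hone i hi) ω
      linarith
    have hEg : S.E g ≤ 0 := by
      have h1 := S.E_sum_le (s := Finset.Icc (n+1) m) (fun i hi => hfmem i (hone i hi))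
      have h2 : ∀ i ∈ Finset.Icc (n+1) m,
          S.E (fun ω => S.Et n (fun ω' => max (S.Et (i-1) (X i) ω') 0) ω +
            S.Et n (fun ω' => max (-(S.Et (i-1) (X i) ω')) 0) ω) ≤ 0 := by
        intro i hi
        have hi1 := hone i hi
        have hp := S.E_pos_part_Et (hmem i hi1) (hind i hi1) (hzero i hi1)
        have hmnn := S.E_neg_part_Et (hmem i hi1) (hind i hi1) (hzero i hi1) (hreg i hi1)
        have hEEp := S.E_Et (Y := fun ω' => max (S.Et (i-1) (X i) ω') 0) n (hWp i hi1)
        have hEEm := S.E_Et (Y := fun ω' => max (-(S.Et (i-1) (X i) ω')) 0) n (hWm i hi1)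
        have hadd := S.E_le_add (S.Et_mem n _ (hWp i hi1)) (S.Et_mem n _ (hWm i hi1))
        have heq : (fun ω => S.Et n (fun ω' => max (S.Et (i-1) (X i) ω') 0) ω +
            S.Et n (fun ω' => max (-(S.Et (i-1) (X i) ω')) 0) ω) =
            S.Et n (fun ω' => max (S.Et (i-1) (X i) ω') 0) +
              S.Et n (fun ω' => max (-(S.Et (i-1) (X i) ω')) 0) := rfl
        rw [heq]
        rw [hEEp, hp] at hadd
        rw [hEEm, hmnn] at hadd
        linarith
      calc S.E g ≤ ∑ i ∈ Finset.Icc (n+1) m,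
            S.E (fun ω => S.Et n (fun ω' => max (S.Et (i-1) (X i) ω') 0) ω +
              S.Et n (fun ω' => max (-(S.Et (i-1) (X i) ω')) 0) ω) := h1
        _ ≤ 0 := Finset.sum_nonpos h2
    have hnull := S.null_of_nonneg_E_nonpos hgmem hg0 hEg
    refine ⟨{ω | g ω ≠ 0}, hnull, ?_⟩
    intro ω hω
    have hgω : g ω = 0 := not_ne_iff.mp hω
    have hpa : 0 ≤ ∑ i ∈ Finset.Icc (n+1) m,
        S.Et n (fun ω' => max (S.Et (i-1) (X i) ω') 0) ω :=
      Finset.sum_nonneg (fun i hi => hEtWp0 i (hone i hi) ω)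
    have hpb : 0 ≤ ∑ i ∈ Finset.Icc (n+1) m,
        S.Et n (fun ω' => max (-(S.Et (i-1) (X i) ω')) 0) ω :=
      Finset.sum_nonneg (fun i hi => hEtWm0 i (hone i hi) ω)
    have hsplit : g ω = (∑ i ∈ Finset.Icc (n+1) m,
        S.Et n (fun ω' => max (S.Et (i-1) (X i) ω') 0) ω) +
        ∑ i ∈ Finset.Icc (n+1) m,
          S.Et n (fun ω' => max (-(S.Et (i-1) (X i) ω')) 0) ω := by
      rw [hgdef]
      exact Finset.sum_add_distrib
    have hupper := S.sandwich_upper hmem hadapt n m hnm ω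
    have hlower := S.sandwich_lower hmem hadapt n m hnm ω
    have ha0 : (∑ i ∈ Finset.Icc (n+1) m,
        S.Et n (fun ω' => max (S.Et (i-1) (X i) ω') 0) ω) = 0 := by
      rw [hgω] at hsplit; linarith
    have hb0 : (∑ i ∈ Finset.Icc (n+1) m,
        S.Et n (fun ω' => max (-(S.Et (i-1) (X i) ω')) 0) ω) = 0 := by
      rw [hgω] at hsplit; linarith
    rw [ha0] at hupper
    rw [hb0] at hlower
    linarith
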